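/- Let P be an m × m real stochastic matrix (m finite). Then the sequence of Cesàro means P*_n = (1/(n+1)) ∑_{i=0}^{n} P^i converges entrywise to some matrix A; moreover A is a stochastic matrix and satisfies AP = PA = A. -/

import Mathlib

open Filter Finset Matrix

theorem cesaro_of_stochastic_matrix_converges
    (m : ℕ) (P : Matrix (Fin m) (Fin m) ℝ)
    (hP_nonneg : ∀ i j, 0 ≤ P i j) (hP_rowsum : ∀ i, ∑ j, P i j = 1) :
    ∃ A : Matrix (Fin m) (Fin m) ℝ,
      (∀ i j, Tendsto
        (fun n : ℕ => (1 / (n + 1 : ℝ)) * (∑ k ∈ Finset.range (n + 1), P ^ k) i j)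
        atTop (nhds (A i j))) ∧
      (∀ i j, 0 ≤ A i j) ∧ (∀ i, ∑ j, A i j = 1) ∧
      A * P = A ∧ P * A = A := by
  classical
  -- powers of P are stochastic
  have hpow : ∀ n : ℕ, (∀ i j, 0 ≤ (P ^ n) i j) ∧ (∀ i, ∑ j, (P ^ n) i j = 1) := by
    intro n
    induction n with
    | zero =>
      constructor
      · intro i j
        by_cases h : i = j <;> simp [Matrix.one_apply, h]
      · intro i
        simp [Matrix.one_apply]
    | succ n ih =>
      constructor
      · intro i j
        rw [pow_succ, Matrix.mul_apply]
        exact Finset.sum_nonneg fun k _ => mul_nonneg (ih.1 i k) (hP_nonneg k j)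
      · intro i
        rw [pow_succ]
        simp only [Matrix.mul_apply]
        rw [Finset.sum_comm]
        have h1 : ∀ k : Fin m, ∑ j, (P ^ n) i k * P k j = (P ^ n) i k := by
          intro k
          rw [← Finset.mul_sum, hP_rowsum, mul_one]
        rw [Finset.sum_congr rfl fun k _ => h1 k]
        exact ih.2 i
  -- entries of powers are at most 1
  have hpow_le : ∀ (n : ℕ) (i j : Fin m), (P ^ n) i j ≤ 1 := by
    intro n i j
    calc (P ^ n) i j ≤ ∑ j', (P ^ n) i j' :=
          Finset.single_le_sum (fun k _ => (hpow n).1 i k) (Finset.mem_univ j)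
      _ = 1 := (hpow n).2 i
  -- uniform bound on entries of P^n * Z
  have hbound : ∀ (Z : Matrix (Fin m) (Fin m) ℝ) (n : ℕ) (i j : Fin m),
      |(P ^ n * Z) i j| ≤ ∑ a, ∑ b, |Z a b| := by
    intro Z n i j
    rw [Matrix.mul_apply]
    calc |∑ k, (P ^ n) i k * Z k j| ≤ ∑ k, |(P ^ n) i k * Z k j| :=
          Finset.abs_sum_le_sum_abs _ _
      _ ≤ ∑ k, |Z k j| := by
          apply Finset.sum_le_sum
          intro k _
          rw [abs_mul, abs_of_nonneg ((hpow n).1 i k)]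
          calc (P ^ n) i k * |Z k j| ≤ 1 * |Z k j| :=
                mul_le_mul_of_nonneg_right (hpow_le n i k) (abs_nonneg _)
            _ = |Z k j| := one_mul _
      _ ≤ ∑ a, ∑ b, |Z a b| := by
          apply Finset.sum_le_sum
          intro k _
          exact Finset.single_le_sum (f := fun b => |Z k b|)
            (fun b _ => abs_nonneg _) (Finset.mem_univ j)
  -- the linear map f = id - (P * ·)
  set f : Matrix (Fin m) (Fin m) ℝ →ₗ[ℝ] Matrix (Fin m) (Fin m) ℝ :=
    LinearMap.id - LinearMap.mulLeft ℝ P with hf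
  have hf_apply : ∀ x, f x = x - P * x := by
    intro x; simp [hf, LinearMap.mulLeft_apply]
  have hker_fix : ∀ x, f x = 0 → P * x = x := by
    intro x hx
    rw [hf_apply] at hx
    exact (sub_eq_zero.mp hx).symm
  have hker_pow : ∀ x, f x = 0 → ∀ k : ℕ, P ^ k * x = x := by
    intro x hx k
    induction k with
    | zero => simp
    | succ k ih => rw [pow_succ', mul_assoc, ih, hker_fix x hx]
  -- telescoping identity
  have htel : ∀ (z : Matrix (Fin m) (Fin m) ℝ) (n : ℕ),
      ∑ k ∈ Finset.range (n + 1), P ^ k * (z - P * z) = z - P ^ (n + 1) * z := by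
    intro z n
    have h1 : ∀ k : ℕ, P ^ k * (z - P * z) = P ^ k * z - P ^ (k + 1) * z := by
      intro k
      rw [Matrix.mul_sub, pow_succ, mul_assoc]
    rw [Finset.sum_congr rfl fun k _ => h1 k]
    rw [Finset.sum_range_sub' (fun k => P ^ k * z)]
    simp
  -- ker f and range f are disjoint
  have hdisj : Disjoint (LinearMap.ker f) (LinearMap.range f) := by
    rw [Submodule.disjoint_def]
    intro x hxk hxr
    obtain ⟨z, hz⟩ := hxr
    rw [hf_apply] at hz
    have hxk' : f x = 0 := hxk
    have h2 : ∀ n : ℕ, ∑ k ∈ Finset.range (n + 1), P ^ k * x = z - P ^ (n + 1) * z := by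
      intro n
      calc ∑ k ∈ Finset.range (n + 1), P ^ k * x
          = ∑ k ∈ Finset.range (n + 1), P ^ k * (z - P * z) := by rw [hz]
        _ = z - P ^ (n + 1) * z := htel z n
    have h3 : ∀ n : ℕ, ∑ k ∈ Finset.range (n + 1), P ^ k * x = (n + 1 : ℕ) • x := by
      intro n
      rw [Finset.sum_congr rfl fun k _ => hker_pow x hxk' k, Finset.sum_const,
        Finset.card_range]
    ext i j
    have key : ∀ n : ℕ, ((n : ℝ) + 1) * |x i j| ≤ |z i j| + ∑ a, ∑ b, |z a b| := by
      intro n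
      have h4 : ((n : ℝ) + 1) * x i j = z i j - (P ^ (n + 1) * z) i j := by
        have := congrFun (congrFun ((h3 n).symm.trans (h2 n)) i) j
        simp only [Matrix.smul_apply, Matrix.sub_apply] at this
        simpa [nsmul_eq_mul] using this
      have h5 : |((n : ℝ) + 1) * x i j| ≤ |z i j| + ∑ a, ∑ b, |z a b| := by
        rw [h4]
        calc |z i j - (P ^ (n + 1) * z) i j| ≤ |z i j| + |(P ^ (n + 1) * z) i j| :=
              abs_sub _ _
          _ ≤ |z i j| + ∑ a, ∑ b, |z a b| := by
              gcongr
              exact hbound z (n + 1) i j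
      rw [abs_mul] at h5
      have : |(n : ℝ) + 1| = (n : ℝ) + 1 := abs_of_pos (by positivity)
      rwa [this] at h5
    by_contra hne
    have hpos : 0 < |x i j| := abs_pos.mpr hne
    obtain ⟨n, hn⟩ := exists_nat_gt ((|z i j| + ∑ a, ∑ b, |z a b|) / |x i j|)
    have h6 : |z i j| + ∑ a, ∑ b, |z a b| < (n : ℝ) * |x i j| :=
      (div_lt_iff₀ hpos).mp hn
    have h7 := key n
    nlinarith [hpos.le]
  -- direct sum decomposition
  have hsup : LinearMap.ker f ⊔ LinearMap.range f = ⊤ := by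
    apply Submodule.eq_top_of_disjoint
    · rw [add_comm]
      exact (LinearMap.finrank_range_add_finrank_ker f).ge
    · exact hdisj
  obtain ⟨Y, hY, W, hW, hYW⟩ :=
    Submodule.mem_sup.mp (hsup ▸ Submodule.mem_top :
      (1 : Matrix (Fin m) (Fin m) ℝ) ∈ LinearMap.ker f ⊔ LinearMap.range f)
  obtain ⟨Z, hZ⟩ := hW
  rw [hf_apply] at hZ
  have hYker : f Y = 0 := LinearMap.mem_ker.mp hY
  have hPY : P * Y = Y := hker_fix Y hYker
  -- main identity for partial sums
  have hsum : ∀ n : ℕ, ∑ k ∈ Finset.range (n + 1), P ^ k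
      = (n + 1 : ℕ) • Y + (Z - P ^ (n + 1) * Z) := by
    intro n
    have h1 : ∀ k : ℕ, P ^ k = P ^ k * Y + P ^ k * (Z - P * Z) := by
      intro k
      rw [← Matrix.mul_add, hZ, hYW, mul_one]
    calc ∑ k ∈ Finset.range (n + 1), P ^ k
        = ∑ k ∈ Finset.range (n + 1), (P ^ k * Y + P ^ k * (Z - P * Z)) :=
          Finset.sum_congr rfl fun k _ => h1 k
      _ = (∑ k ∈ Finset.range (n + 1), P ^ k * Y)
          + ∑ k ∈ Finset.range (n + 1), P ^ k * (Z - P * Z) := Finset.sum_add_distrib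
      _ = (n + 1 : ℕ) • Y + (Z - P ^ (n + 1) * Z) := by
          rw [Finset.sum_congr rfl fun k _ => hker_pow Y hYker k, Finset.sum_const,
            Finset.card_range, htel]
  -- entrywise form
  have hsum' : ∀ (n : ℕ) (i j : Fin m),
      (∑ k ∈ Finset.range (n + 1), P ^ k) i j
        = ((n : ℝ) + 1) * Y i j + (Z i j - (P ^ (n + 1) * Z) i j) := by
    intro n i j
    have := congrFun (congrFun (hsum n) i) j
    simp only [Matrix.add_apply, Matrix.sub_apply, Matrix.smul_apply] at this
    simpa [nsmul_eq_mul] using this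
  -- the entrywise limits
  have hzero : ∀ i j : Fin m, Tendsto
      (fun n : ℕ => (1 / ((n : ℝ) + 1)) * (Z i j - (P ^ (n + 1) * Z) i j))
      atTop (nhds 0) := by
    intro i j
    apply squeeze_zero_norm
      (a := fun n : ℕ => (|Z i j| + ∑ a, ∑ b, |Z a b|) * (1 / ((n : ℝ) + 1)))
    · intro n
      rw [Real.norm_eq_abs, abs_mul]
      have h1 : |1 / ((n : ℝ) + 1)| = 1 / ((n : ℝ) + 1) := abs_of_pos (by positivity)
      rw [h1, mul_comm]
      gcongr
      calc |Z i j - (P ^ (n + 1) * Z) i j| ≤ |Z i j| + |(P ^ (n + 1) * Z) i j| :=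
            abs_sub _ _
        _ ≤ |Z i j| + ∑ a, ∑ b, |Z a b| := by gcongr; exact hbound Z (n + 1) i j
    · have := tendsto_one_div_add_atTop_nhds_zero_nat.const_mul
        (|Z i j| + ∑ a, ∑ b, |Z a b|)
      simpa using this
  have htend : ∀ i j : Fin m, Tendsto
      (fun n : ℕ => (1 / (n + 1 : ℝ)) * (∑ k ∈ Finset.range (n + 1), P ^ k) i j)
      atTop (nhds (Y i j)) := by
    intro i j
    have h1 : Tendsto
        (fun n : ℕ => Y i j + (1 / ((n : ℝ) + 1)) * (Z i j - (P ^ (n + 1) * Z) i j))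
        atTop (nhds (Y i j)) := by
      have := (hzero i j).const_add (Y i j)
      simpa using this
    apply h1.congr
    intro n
    have hne : (n : ℝ) + 1 ≠ 0 := by positivity
    rw [hsum' n i j]
    field_simp
  refine ⟨Y, htend, ?_, ?_, ?_, hPY⟩
  · -- nonnegativity
    intro i j
    apply ge_of_tendsto' (htend i j)
    intro n
    rw [Matrix.sum_apply]
    exact mul_nonneg (by positivity)
      (Finset.sum_nonneg fun k _ => (hpow k).1 i j)
  · -- row sums equal 1
    intro i
    have h1 : Tendsto
        (fun n : ℕ => ∑ j, (1 / (n + 1 : ℝ)) * (∑ k ∈ Finset.range (n + 1), P ^ k) i j)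
        atTop (nhds (∑ j, Y i j)) :=
      tendsto_finset_sum _ fun j _ => htend i j
    have h2 : ∀ n : ℕ,
        ∑ j, (1 / (n + 1 : ℝ)) * (∑ k ∈ Finset.range (n + 1), P ^ k) i j = 1 := by
      intro n
      rw [← Finset.mul_sum]
      have h3 : ∑ j, (∑ k ∈ Finset.range (n + 1), P ^ k) i j = (n : ℝ) + 1 := by
        simp only [Matrix.sum_apply]
        rw [Finset.sum_comm]
        rw [Finset.sum_congr rfl fun k _ => (hpow k).2 i]
        simp
      rw [h3]
      have hne : (n : ℝ) + 1 ≠ 0 := by positivity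
      field_simp
    have h4 : Tendsto
        (fun n : ℕ => ∑ j, (1 / (n + 1 : ℝ)) * (∑ k ∈ Finset.range (n + 1), P ^ k) i j)
        atTop (nhds 1) := by
      rw [tendsto_congr h2]
      exact tendsto_const_nhds
    exact tendsto_nhds_unique h1 h4
  · -- Y * P = Y
    ext i j
    have h1 : Tendsto
        (fun n : ℕ => ∑ k, ((1 / (n + 1 : ℝ)) * (∑ t ∈ Finset.range (n + 1), P ^ t) i k)
          * P k j)
        atTop (nhds ((Y * P) i j)) := by
      rw [Matrix.mul_apply]
      exact tendsto_finset_sum _ fun k _ => (htend i k).mul_const _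
    have hshift : ∀ n : ℕ,
        (∑ t ∈ Finset.range (n + 1), P ^ t) * P
          = (∑ t ∈ Finset.range (n + 1), P ^ t) + P ^ (n + 1) - 1 := by
      intro n
      rw [Finset.sum_mul]
      have h2 : ∀ t : ℕ, P ^ t * P = P ^ (t + 1) := fun t => (pow_succ P t).symm
      rw [Finset.sum_congr rfl fun t _ => h2 t]
      have h3 : ∑ t ∈ Finset.range (n + 2), P ^ t
          = (∑ t ∈ Finset.range (n + 1), P ^ (t + 1)) + P ^ 0 :=
        Finset.sum_range_succ' _ _
      have h4 : ∑ t ∈ Finset.range (n + 2), P ^ t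
          = (∑ t ∈ Finset.range (n + 1), P ^ t) + P ^ (n + 1) :=
        Finset.sum_range_succ _ _
      have h5 := h3.symm.trans h4
      rw [pow_zero] at h5
      linear_combination (norm := abel) h5
    have h6 : ∀ n : ℕ,
        ∑ k, ((1 / (n + 1 : ℝ)) * (∑ t ∈ Finset.range (n + 1), P ^ t) i k) * P k j
          = (1 / (n + 1 : ℝ)) * (∑ t ∈ Finset.range (n + 1), P ^ t) i j
            + (1 / (n + 1 : ℝ)) * ((P ^ (n + 1)) i j - (1 : Matrix (Fin m) (Fin m) ℝ) i j) := by
      intro n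
      have h7 : ∑ k, ((1 / (n + 1 : ℝ)) * (∑ t ∈ Finset.range (n + 1), P ^ t) i k) * P k j
          = (1 / (n + 1 : ℝ)) * ((∑ t ∈ Finset.range (n + 1), P ^ t) * P) i j := by
        rw [Matrix.mul_apply, Finset.mul_sum]
        exact Finset.sum_congr rfl fun k _ => by ring
      rw [h7, hshift n]
      simp only [Matrix.add_apply, Matrix.sub_apply]
      ring
    have h8 : Tendsto
        (fun n : ℕ => (1 / (n + 1 : ℝ))
          * ((P ^ (n + 1)) i j - (1 : Matrix (Fin m) (Fin m) ℝ) i j))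
        atTop (nhds 0) := by
      apply squeeze_zero_norm (a := fun n : ℕ => 2 * (1 / ((n : ℝ) + 1)))
      · intro n
        rw [Real.norm_eq_abs, abs_mul]
        have ha : |1 / ((n : ℝ) + 1)| = 1 / ((n : ℝ) + 1) := abs_of_pos (by positivity)
        rw [ha, mul_comm]
        gcongr
        have hb : |(P ^ (n + 1)) i j| ≤ 1 := by
          rw [abs_of_nonneg ((hpow (n + 1)).1 i j)]
          exact hpow_le (n + 1) i j
        have hc : |(1 : Matrix (Fin m) (Fin m) ℝ) i j| ≤ 1 := by
          by_cases h : i = j <;> simp [Matrix.one_apply, h]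
        calc |(P ^ (n + 1)) i j - (1 : Matrix (Fin m) (Fin m) ℝ) i j|
            ≤ |(P ^ (n + 1)) i j| + |(1 : Matrix (Fin m) (Fin m) ℝ) i j| := abs_sub _ _
          _ ≤ 2 := by linarith
      · have := tendsto_one_div_add_atTop_nhds_zero_nat.const_mul (2 : ℝ)
        simpa using this
    have h9 : Tendsto
        (fun n : ℕ => ∑ k, ((1 / (n + 1 : ℝ)) * (∑ t ∈ Finset.range (n + 1), P ^ t) i k)
          * P k j)
        atTop (nhds (Y i j)) := by
      have := (htend i j).add h8
      rw [add_zero] at this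
      exact this.congr fun n => (h6 n).symm
    exact tendsto_nhds_unique h1 h9
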